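/- The truncated gauged DNLS flow on E_N preserves the Lebesgue measure on ℂ^{2N+1}: the vector field F_n(f) = i f''(n) - 2αμ[f] f'(n) + c₁(P_N(|f|²f'))(n) + c₂(P_N(f²f̄'))(n) - ic₃(P_N(|f|⁴f))(n) - ic₄ μ[f](P_N(|f|²f))(n) - i(Γ[f] f)(n), viewed as a function of the Fourier coefficients (f(n))_{|n|≤N}, has vanishing divergence: Σ_{|n|≤N} (∂F_n/∂f(n) + ∂F̄_n/∂f̄(n)) = 0. -/

import Mathlib

open MeasureTheory intervalIntegral

noncomputable section

/-- The density `|f|² - ‖f‖²_{L²}/(2π)` on the torus, realized on `[0,2π]`. -/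
def gaugeDens (f : ℝ → ℂ) (y : ℝ) : ℝ :=
  ‖f y‖ ^ 2 - (∫ t in (0:ℝ)..(2 * Real.pi), ‖f t‖ ^ 2) / (2 * Real.pi)

/-- The zero-average periodic primitive `I[f]`. -/
def gaugePrim (f : ℝ → ℂ) (x : ℝ) : ℝ :=
  (1 / (2 * Real.pi)) *
    ∫ θ in (0:ℝ)..(2 * Real.pi), ∫ y in θ..x, gaugeDens f y

/-- `n`-th Fourier coefficient on the torus of length `2π`. -/
def fCoeff (f : ℝ → ℂ) (n : ℤ) : ℂ :=
  (1 / (2 * Real.pi)) * ∫ x in (0:ℝ)..(2 * Real.pi), f x * Complex.exp (-Complex.I * (n : ℂ) * (x : ℂ))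

/-- Index set of Fourier modes `|n| ≤ N`. -/
abbrev Idx (N : ℕ) := {n : ℤ // n ∈ Finset.Icc (-(N:ℤ)) (N:ℤ)}

/-- Extension of a coefficient vector by zero. -/
def extCoeff (N : ℕ) (c : Idx N → ℂ) : ℤ → ℂ :=
  fun n => if h : n ∈ Finset.Icc (-(N:ℤ)) (N:ℤ) then c ⟨n, h⟩ else 0

/-- The trigonometric polynomial with Fourier coefficients `c`. -/
def toFun (N : ℕ) (c : Idx N → ℂ) : ℝ → ℂ :=
  fun x => ∑ n : Idx N, c n * Complex.exp (Complex.I * ((n : ℤ) : ℂ) * (x : ℂ))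

/-- Wirtinger derivative `∂G/∂c(n)` at `c`, via the real Fréchet derivative. -/
def partialZ {N : ℕ} (G : (Idx N → ℂ) → ℂ) (c : Idx N → ℂ) (n : Idx N) : ℂ :=
  (fderiv ℝ G c (Pi.single n 1) - Complex.I * fderiv ℝ G c (Pi.single n Complex.I)) / 2

/-- Divergence `Σ_{|n|≤N} (∂F_n/∂f(n) + ∂F̄_n/∂f̄(n))`, using `∂F̄_n/∂f̄(n) = conj (∂F_n/∂f(n))`. -/
def cdiv {N : ℕ} (F : Idx N → (Idx N → ℂ) → ℂ) (c : Idx N → ℂ) : ℂ :=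
  ∑ n : Idx N, (partialZ (F n) c n + (starRingEnd ℂ) (partialZ (F n) c n))


set_option maxHeartbeats 1000000

open Complex ComplexConjugate

namespace Stmt18Aux

/-! ### Basic exponentials -/

def eI (k : ℤ) (x : ℝ) : ℂ := Complex.exp (Complex.I * k * x)

lemma eI_mul_eI (j k : ℤ) (x : ℝ) : eI j x * eI k x = eI (j+k) x := by
  simp only [eI, ← Complex.exp_add]
  ring_nf
  push_cast
  ring_nf

lemma conj_eI (k : ℤ) (x : ℝ) : (starRingEnd ℂ) (eI k x) = eI (-k) x := by
  simp only [eI, ← Complex.exp_conj]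
  congr 1
  simp [map_mul]

lemma continuous_eI (k : ℤ) : Continuous (eI k) := by
  unfold eI; fun_prop

lemma integral_eI (m : ℤ) :
    (∫ x in (0:ℝ)..(2*Real.pi), eI m x) = if m = 0 then (2*Real.pi:ℂ) else 0 := by
  by_cases h : m = 0
  · simp [eI, h]
  · have hc : (Complex.I * m) ≠ 0 := by
      simp [Complex.I_ne_zero, Complex.ext_iff]
      exact_mod_cast h
    rw [if_neg h]
    have := integral_exp_mul_complex (a := 0) (b := 2*Real.pi) hc
    simp only [eI, mul_assoc] at this ⊢
    rw [this]
    have h1 : Complex.exp (Complex.I * ((m:ℂ) * ((2*Real.pi:ℝ):ℂ))) = 1 := by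
      have := Complex.exp_int_mul_two_pi_mul_I m
      rw [← this]
      congr 1
      push_cast
      ring
    rw [h1]
    simp

end Stmt18Aux

/-- The coefficient vector field `F_n(f) = i (P_N(I[P_N f] · P_N f))(n)`. -/
def gaugeField (N : ℕ) (n : Idx N) (c : Idx N → ℂ) : ℂ :=
  Complex.I * fCoeff (fun x => ((gaugePrim (toFun N c) x : ℝ) : ℂ) * toFun N c x) (n : ℤ)

/-- Squared `H¹` norm of a coefficient vector: `Σ (1+n²)|f(n)|²`. -/
def h1normSq (N : ℕ) (c : Idx N → ℂ) : ℝ :=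
  ∑ n : Idx N, (1 + ((n : ℤ) : ℝ) ^ 2) * ‖c n‖ ^ 2

/-- The mass `μ[f] = (1/2π)‖f‖²_{L²}`. -/
def massOf (g : ℝ → ℂ) : ℝ := (1 / (2 * Real.pi)) * ∫ y in (0:ℝ)..(2 * Real.pi), ‖g y‖ ^ 2

/-- The functional `Γ[f]`. -/
def GammaF (α β : ℝ) (g : ℝ → ℂ) : ℂ :=
  (((3 * α * β / (4 * Real.pi) + α ^ 2 / Real.pi)
      * ∫ y in (0:ℝ)..(2 * Real.pi), ‖g y‖ ^ 4 : ℝ) : ℂ)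
    - ((α ^ 2 * (massOf g) ^ 2 : ℝ) : ℂ)
    + Complex.I * (α : ℂ) / (Real.pi : ℂ) *
        ∫ y in (0:ℝ)..(2 * Real.pi), deriv g y * (starRingEnd ℂ) (g y)

/-- The truncated gauged DNLS vector field in Fourier coordinates, with
`c₁ = 2(α+β)`, `c₂ = 2α+β`, `c₃ = -α²-αβ/2`, `c₄ = -αβ`. -/
def gdnlsField (N : ℕ) (α β : ℝ) (n : Idx N) (c : Idx N → ℂ) : ℂ :=
  let f := toFun N c
  Complex.I * fCoeff (deriv (deriv f)) (n : ℤ)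
    - ((2 * α * massOf f : ℝ) : ℂ) * fCoeff (deriv f) (n : ℤ)
    + ((2 * (α + β) : ℝ) : ℂ) * fCoeff (fun x => ((‖f x‖ ^ 2 : ℝ) : ℂ) * deriv f x) (n : ℤ)
    + ((2 * α + β : ℝ) : ℂ) * fCoeff (fun x => (f x) ^ 2 * (starRingEnd ℂ) (deriv f x)) (n : ℤ)
    - Complex.I * ((-α ^ 2 - α * β / 2 : ℝ) : ℂ)
        * fCoeff (fun x => ((‖f x‖ ^ 4 : ℝ) : ℂ) * f x) (n : ℤ)
    - Complex.I * ((-(α * β) : ℝ) : ℂ) * ((massOf f : ℝ) : ℂ)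
        * fCoeff (fun x => ((‖f x‖ ^ 2 : ℝ) : ℂ) * f x) (n : ℤ)
    - Complex.I * GammaF α β f * c n


namespace Stmt18Aux

variable {N : ℕ}

lemma fCoeff_sum {ι : Type*} [Fintype ι] (a : ι → ℂ) (k : ι → ℤ) (n : ℤ) :
    fCoeff (fun x => ∑ t, a t * eI (k t) x) n = ∑ t, if k t = n then a t else 0 := by
  unfold fCoeff
  have key : ∀ x : ℝ, (∑ t, a t * eI (k t) x) * Complex.exp (-Complex.I * n * x)
      = ∑ t, a t * eI (k t + -n) x := by
    intro x
    have he : Complex.exp (-Complex.I * n * x) = eI (-n) x := by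
      unfold eI; push_cast; ring_nf
    rw [he, Finset.sum_mul]
    exact Finset.sum_congr rfl fun t _ => by rw [mul_assoc, eI_mul_eI]
  simp only [key]
  rw [intervalIntegral.integral_finset_sum (fun t _ =>
    ((show Continuous (fun x => a t * eI (k t + -n) x) from
      continuous_const.mul (continuous_eI (k t + -n))).intervalIntegrable _ _))]
  simp only [intervalIntegral.integral_const_mul, integral_eI, Finset.mul_sum]
  refine Finset.sum_congr rfl fun t _ => ?_
  have hpi : (Real.pi : ℂ) ≠ 0 := Complex.ofReal_ne_zero.mpr Real.pi_ne_zero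
  by_cases h : k t = n
  · have h' : k t + -n = 0 := by omega
    simp only [h', if_pos h, if_pos rfl, if_true]
    field_simp
  · have h' : ¬ (k t + -n = 0) := by omega
    simp [h', h]

lemma int_eq_fCoeff (g : ℝ → ℂ) :
    (∫ x in (0:ℝ)..(2*Real.pi), g x) = (2*(Real.pi:ℂ)) * fCoeff g 0 := by
  have hpi : (Real.pi : ℂ) ≠ 0 := Complex.ofReal_ne_zero.mpr Real.pi_ne_zero
  unfold fCoeff
  simp only [Int.cast_zero, mul_zero, zero_mul, neg_mul, neg_zero, Complex.exp_zero, mul_one]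
  field_simp

/-! ### Derivatives and conjugates of trig sums -/

variable {c : Idx N → ℂ}

lemma toFun_eq : toFun N c = fun x => ∑ t : Idx N, c t * eI (t:ℤ) x := rfl

lemma hasDerivAt_eI (k : ℤ) (x : ℝ) : HasDerivAt (eI k) (Complex.I * k * eI k x) x := by
  have h1 : HasDerivAt (fun y : ℝ => Complex.I * k * (y:ℂ)) (Complex.I * k) x := by
    simpa using (Complex.ofRealCLM.hasDerivAt (x := x)).const_mul (Complex.I * (k:ℂ))
  have h2 := h1.cexp
  show HasDerivAt (fun x : ℝ => eI k x) _ _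
  simp only [eI]
  convert h2 using 1
  ring

lemma hasDerivAt_sumExp {ι : Type*} [Fintype ι] (A : ι → ℂ) (k : ι → ℤ) (x : ℝ) :
    HasDerivAt (fun x => ∑ t, A t * eI (k t) x)
      (∑ t, (A t * (Complex.I * k t)) * eI (k t) x) x := by
  have : HasDerivAt (fun x => ∑ t : ι, A t * eI (k t) x)
      (∑ t : ι, A t * (Complex.I * k t * eI (k t) x)) x :=
    HasDerivAt.fun_sum fun t _ => (hasDerivAt_eI (k t) x).const_mul (A t)
  simpa [mul_assoc] using this

lemma deriv_sumExp {ι : Type*} [Fintype ι] (A : ι → ℂ) (k : ι → ℤ) :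
    deriv (fun x => ∑ t, A t * eI (k t) x)
      = fun x => ∑ t, (A t * (Complex.I * k t)) * eI (k t) x :=
  funext fun x => (hasDerivAt_sumExp A k x).deriv

lemma conj_sumExp {ι : Type*} [Fintype ι] (A : ι → ℂ) (k : ι → ℤ) (x : ℝ) :
    conj (∑ t, A t * eI (k t) x) = ∑ t, conj (A t) * eI (-(k t)) x := by
  rw [map_sum]
  exact Finset.sum_congr rfl fun t _ => by rw [map_mul, conj_eI]

lemma sum_exp_mul₂ {ι₁ ι₂ : Type*} [Fintype ι₁] [Fintype ι₂]
    (A : ι₁ → ℂ) (k₁ : ι₁ → ℤ) (B : ι₂ → ℂ) (k₂ : ι₂ → ℤ) (x : ℝ) :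
    (∑ a, A a * eI (k₁ a) x) * (∑ b, B b * eI (k₂ b) x)
      = ∑ t : ι₁ × ι₂, (A t.1 * B t.2) * eI (k₁ t.1 + k₂ t.2) x := by
  rw [Finset.sum_mul_sum, Fintype.sum_prod_type]
  exact Finset.sum_congr rfl fun a _ => Finset.sum_congr rfl fun b _ => by
    rw [← eI_mul_eI]; ring

lemma normSq_toFun (x : ℝ) :
    ((‖toFun N c x‖^2 : ℝ) : ℂ)
      = ∑ t : Idx N × Idx N, (c t.1 * conj (c t.2)) * eI ((t.1:ℤ) + -(t.2:ℤ)) x := by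
  have h : ((‖toFun N c x‖^2 : ℝ) : ℂ) = toFun N c x * conj (toFun N c x) := by
    rw [Complex.mul_conj]
    norm_cast
    rw [Complex.sq_norm]
  rw [h, toFun_eq]
  rw [conj_sumExp, sum_exp_mul₂]

/-! ### The polynomial coefficient functionals -/

def muC (N : ℕ) (c : Idx N → ℂ) : ℂ := ∑ m : Idx N, c m * conj (c m)

def PC (N : ℕ) (c : Idx N → ℂ) : ℂ := ∑ m : Idx N, ((m:ℤ):ℂ) * (c m * conj (c m))

def AC (N : ℕ) (n : ℤ) (c : Idx N → ℂ) : ℂ :=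
  ∑ t : (Idx N × Idx N) × Idx N,
    if (t.1.1:ℤ) + -(t.1.2:ℤ) + (t.2:ℤ) = n
    then (c t.1.1 * conj (c t.1.2)) * c t.2 else 0

def BC (N : ℕ) (n : ℤ) (c : Idx N → ℂ) : ℂ :=
  ∑ t : (Idx N × Idx N) × Idx N,
    if (t.1.1:ℤ) + -(t.1.2:ℤ) + (t.2:ℤ) = n
    then (c t.1.1 * conj (c t.1.2)) * (c t.2 * (Complex.I * (t.2:ℤ))) else 0

def CC (N : ℕ) (n : ℤ) (c : Idx N → ℂ) : ℂ :=
  ∑ t : (Idx N × Idx N) × Idx N,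
    if (t.1.1:ℤ) + (t.1.2:ℤ) + -(t.2:ℤ) = n
    then (c t.1.1 * c t.1.2) * conj (c t.2 * (Complex.I * (t.2:ℤ))) else 0

def QC (N : ℕ) (c : Idx N → ℂ) : ℂ :=
  ∑ t : (Idx N × Idx N) × (Idx N × Idx N),
    if (t.1.1:ℤ) + -(t.1.2:ℤ) + ((t.2.1:ℤ) + -(t.2.2:ℤ)) = 0
    then (c t.1.1 * conj (c t.1.2)) * (c t.2.1 * conj (c t.2.2)) else 0

def Q5C (N : ℕ) (n : ℤ) (c : Idx N → ℂ) : ℂ :=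
  ∑ t : ((Idx N × Idx N) × (Idx N × Idx N)) × Idx N,
    if (t.1.1.1:ℤ) + -(t.1.1.2:ℤ) + ((t.1.2.1:ℤ) + -(t.1.2.2:ℤ)) + (t.2:ℤ) = n
    then ((c t.1.1.1 * conj (c t.1.1.2)) * (c t.1.2.1 * conj (c t.1.2.2))) * c t.2 else 0

def GammaC (N : ℕ) (α β : ℝ) (c : Idx N → ℂ) : ℂ :=
  ((3*α*β/(4*Real.pi) + α^2/Real.pi : ℝ):ℂ) * (2*(Real.pi:ℂ)) * QC N c
    - ((α^2:ℝ):ℂ) * (muC N c)^2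
    + (Complex.I*(α:ℂ)/(Real.pi:ℂ)) * (2*(Real.pi:ℂ)) * (Complex.I * PC N c)


/-! ### Fourier coefficient computations -/

lemma sum_delta_coe (g : Idx N → ℂ) (n : Idx N) :
    (∑ t : Idx N, if (t:ℤ) = (n:ℤ) then g t else 0) = g n := by
  rw [Finset.sum_congr rfl (fun t _ => if_congr Subtype.coe_inj rfl rfl)]
  simp

lemma sum_pair_delta (g : Idx N → Idx N → ℂ) :
    (∑ t : Idx N × Idx N, if (t.1:ℤ) + -(t.2:ℤ) = 0 then g t.1 t.2 else 0)
      = ∑ a : Idx N, g a a := by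
  have hiff : ∀ t : Idx N × Idx N,
      (if (t.1:ℤ) + -(t.2:ℤ) = 0 then g t.1 t.2 else 0)
        = (if t.2 = t.1 then g t.1 t.2 else 0) := fun t =>
    if_congr ⟨fun h => Subtype.ext (by linarith), fun h => by rw [h]; ring⟩ rfl rfl
  simp_rw [hiff]
  rw [Fintype.sum_prod_type]
  simp

lemma fCoeff_deriv (n : Idx N) :
    fCoeff (deriv (toFun N c)) (n:ℤ) = c n * (Complex.I * (n:ℤ)) := by
  rw [toFun_eq, deriv_sumExp, fCoeff_sum, sum_delta_coe]

lemma fCoeff_deriv2 (n : Idx N) :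
    fCoeff (deriv (deriv (toFun N c))) (n:ℤ)
      = (c n * (Complex.I * (n:ℤ))) * (Complex.I * (n:ℤ)) := by
  rw [toFun_eq, deriv_sumExp, deriv_sumExp, fCoeff_sum, sum_delta_coe]

lemma fCoeff_BC (n : Idx N) :
    fCoeff (fun x => ((‖toFun N c x‖^2 : ℝ):ℂ) * deriv (toFun N c) x) (n:ℤ)
      = BC N (n:ℤ) c := by
  have h : (fun x => ((‖toFun N c x‖^2 : ℝ):ℂ) * deriv (toFun N c) x)
      = fun x => ∑ t : (Idx N × Idx N) × Idx N,
          ((c t.1.1 * conj (c t.1.2)) * (c t.2 * (Complex.I * (t.2:ℤ))))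
            * eI ((t.1.1:ℤ) + -(t.1.2:ℤ) + (t.2:ℤ)) x := by
    funext x
    rw [normSq_toFun]
    conv_lhs => rw [toFun_eq, deriv_sumExp]
    rw [sum_exp_mul₂]
  rw [h, fCoeff_sum]
  rfl

lemma fCoeff_AC (n : Idx N) :
    fCoeff (fun x => ((‖toFun N c x‖^2 : ℝ):ℂ) * toFun N c x) (n:ℤ)
      = AC N (n:ℤ) c := by
  have h : (fun x => ((‖toFun N c x‖^2 : ℝ):ℂ) * toFun N c x)
      = fun x => ∑ t : (Idx N × Idx N) × Idx N,
          ((c t.1.1 * conj (c t.1.2)) * c t.2)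
            * eI ((t.1.1:ℤ) + -(t.1.2:ℤ) + (t.2:ℤ)) x := by
    funext x
    rw [normSq_toFun]
    conv_lhs => rw [toFun_eq]
    rw [sum_exp_mul₂]
  rw [h, fCoeff_sum]
  rfl

lemma fCoeff_CC (n : Idx N) :
    fCoeff (fun x => (toFun N c x)^2 * conj (deriv (toFun N c) x)) (n:ℤ)
      = CC N (n:ℤ) c := by
  have h : (fun x => (toFun N c x)^2 * conj (deriv (toFun N c) x))
      = fun x => ∑ t : (Idx N × Idx N) × Idx N,
          ((c t.1.1 * c t.1.2) * conj (c t.2 * (Complex.I * (t.2:ℤ))))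
            * eI ((t.1.1:ℤ) + (t.1.2:ℤ) + -(t.2:ℤ)) x := by
    funext x
    rw [pow_two]
    conv_lhs => rw [toFun_eq, deriv_sumExp]
    rw [conj_sumExp, sum_exp_mul₂, sum_exp_mul₂]
  rw [h, fCoeff_sum]
  rfl

lemma norm4_toFun (x : ℝ) :
    ((‖toFun N c x‖^4 : ℝ) : ℂ)
      = ∑ t : (Idx N × Idx N) × (Idx N × Idx N),
          ((c t.1.1 * conj (c t.1.2)) * (c t.2.1 * conj (c t.2.2)))
            * eI ((t.1.1:ℤ) + -(t.1.2:ℤ) + ((t.2.1:ℤ) + -(t.2.2:ℤ))) x := by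
  have h : ((‖toFun N c x‖^4 : ℝ) : ℂ)
      = ((‖toFun N c x‖^2 : ℝ) : ℂ) * ((‖toFun N c x‖^2 : ℝ) : ℂ) := by
    push_cast; ring
  rw [h, normSq_toFun, sum_exp_mul₂]

lemma fCoeff_Q5C (n : Idx N) :
    fCoeff (fun x => ((‖toFun N c x‖^4 : ℝ):ℂ) * toFun N c x) (n:ℤ)
      = Q5C N (n:ℤ) c := by
  have h : (fun x => ((‖toFun N c x‖^4 : ℝ):ℂ) * toFun N c x)
      = fun x => ∑ t : ((Idx N × Idx N) × (Idx N × Idx N)) × Idx N,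
          (((c t.1.1.1 * conj (c t.1.1.2)) * (c t.1.2.1 * conj (c t.1.2.2))) * c t.2)
            * eI ((t.1.1.1:ℤ) + -(t.1.1.2:ℤ) + ((t.1.2.1:ℤ) + -(t.1.2.2:ℤ)) + (t.2:ℤ)) x := by
    funext x
    rw [norm4_toFun]
    conv_lhs => rw [toFun_eq]
    rw [sum_exp_mul₂]
  rw [h, fCoeff_sum]
  rfl

lemma mass_eq : ((massOf (toFun N c) : ℝ) : ℂ) = muC N c := by
  have hpi : (Real.pi : ℂ) ≠ 0 := Complex.ofReal_ne_zero.mpr Real.pi_ne_zero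
  unfold massOf
  push_cast
  rw [← intervalIntegral.integral_ofReal (f := fun y => ‖toFun N c y‖^2)]
  rw [int_eq_fCoeff]
  have h : (fun x : ℝ => ((‖toFun N c x‖^2 : ℝ):ℂ))
      = fun x => ∑ t : Idx N × Idx N,
          (c t.1 * conj (c t.2)) * eI ((t.1:ℤ) + -(t.2:ℤ)) x := by
    funext x; exact normSq_toFun x
  rw [h, fCoeff_sum]
  rw [sum_pair_delta (g := fun a b => c a * conj (c b))]
  rw [show (∑ a : Idx N, c a * conj (c a)) = muC N c from rfl]
  field_simp

lemma int4_eq :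
    ((∫ y in (0:ℝ)..(2*Real.pi), ‖toFun N c y‖^4 : ℝ) : ℂ)
      = 2*(Real.pi:ℂ) * QC N c := by
  rw [← intervalIntegral.integral_ofReal (f := fun y => ‖toFun N c y‖^4)]
  rw [int_eq_fCoeff]
  have h : (fun x : ℝ => ((‖toFun N c x‖^4 : ℝ):ℂ))
      = fun x => ∑ t : (Idx N × Idx N) × (Idx N × Idx N),
          ((c t.1.1 * conj (c t.1.2)) * (c t.2.1 * conj (c t.2.2)))
            * eI ((t.1.1:ℤ) + -(t.1.2:ℤ) + ((t.2.1:ℤ) + -(t.2.2:ℤ))) x := by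
    funext x; exact norm4_toFun x
  rw [h, fCoeff_sum]
  rfl

lemma intPC_eq :
    (∫ y in (0:ℝ)..(2*Real.pi), deriv (toFun N c) y * conj (toFun N c y))
      = 2*(Real.pi:ℂ) * (Complex.I * PC N c) := by
  rw [int_eq_fCoeff]
  have h : (fun x : ℝ => deriv (toFun N c) x * conj (toFun N c x))
      = fun x => ∑ t : Idx N × Idx N,
          ((c t.1 * (Complex.I * (t.1:ℤ))) * conj (c t.2)) * eI ((t.1:ℤ) + -(t.2:ℤ)) x := by
    funext x
    conv_lhs => rw [toFun_eq, deriv_sumExp]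
    rw [conj_sumExp, sum_exp_mul₂]
  rw [h, fCoeff_sum, sum_pair_delta (g := fun a b => (c a * (Complex.I * (a:ℤ))) * conj (c b))]
  congr 1
  rw [PC, Finset.mul_sum]
  exact Finset.sum_congr rfl fun a _ => by ring

lemma Gamma_eq (α β : ℝ) : GammaF α β (toFun N c) = GammaC N α β c := by
  unfold GammaF GammaC
  rw [intPC_eq]
  push_cast [mass_eq, int4_eq]
  ring

lemma gdnls_explicit (α β : ℝ) (n : Idx N) (c : Idx N → ℂ) :
    gdnlsField N α β n c
      = Complex.I * ((c n * (Complex.I*((n:ℤ):ℂ))) * (Complex.I*((n:ℤ):ℂ)))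
        - ((2*α:ℝ):ℂ) * muC N c * (c n * (Complex.I*((n:ℤ):ℂ)))
        + ((2*(α+β):ℝ):ℂ) * BC N (n:ℤ) c
        + ((2*α+β:ℝ):ℂ) * CC N (n:ℤ) c
        - Complex.I * ((-α^2-α*β/2:ℝ):ℂ) * Q5C N (n:ℤ) c
        - Complex.I * ((-(α*β):ℝ):ℂ) * (muC N c * AC N (n:ℤ) c)
        - Complex.I * (GammaC N α β c * c n) := by
  unfold gdnlsField
  dsimp only
  rw [fCoeff_deriv2, fCoeff_deriv, fCoeff_BC, fCoeff_CC, fCoeff_Q5C, fCoeff_AC, Gamma_eq]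
  push_cast [mass_eq]
  ring


/-! ### Wirtinger derivative calculus -/

structure Wir (c : Idx N → ℂ) (n : Idx N) (G : (Idx N → ℂ) → ℂ) (d : ℂ) : Prop where
  diff : DifferentiableAt ℝ G c
  pz : partialZ G c n = d

variable {n : Idx N}

lemma Wir.of_hasFDerivAt {G : (Idx N → ℂ) → ℂ} {d : ℂ} (L : (Idx N → ℂ) →L[ℝ] ℂ)
    (h : HasFDerivAt G L c)
    (hval : (L (Pi.single n 1) - Complex.I * L (Pi.single n Complex.I)) / 2 = d) :
    Wir c n G d :=
  ⟨h.differentiableAt, by rw [partialZ, h.fderiv]; exact hval⟩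

lemma Wir.of_eq {G d d'} (h : Wir c n G d) (he : d = d') : Wir c n G d' := he ▸ h

lemma Wir.const (k : ℂ) : Wir c n (fun _ => k) 0 :=
  .of_hasFDerivAt 0 (hasFDerivAt_const k c) (by simp)

lemma Wir.coord (m : Idx N) : Wir c n (fun c => c m) (if m = n then 1 else 0) := by
  refine .of_hasFDerivAt (ContinuousLinearMap.proj m)
    ((ContinuousLinearMap.proj (R := ℝ) (φ := fun _ : Idx N => ℂ) m).hasFDerivAt) ?_
  simp only [ContinuousLinearMap.proj_apply, Pi.single_apply]
  by_cases h : m = n <;> simp [h, Complex.I_mul_I]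

lemma Wir.conj_coord (m : Idx N) : Wir c n (fun c => conj (c m)) 0 := by
  refine .of_hasFDerivAt ((Complex.conjCLE.toContinuousLinearMap).comp
    (ContinuousLinearMap.proj m)) ?_ ?_
  · exact (Complex.conjCLE.toContinuousLinearMap.hasFDerivAt).comp c
      ((ContinuousLinearMap.proj (R := ℝ) (φ := fun _ : Idx N => ℂ) m).hasFDerivAt)
  · simp only [ContinuousLinearMap.coe_comp', Function.comp_apply,
      ContinuousLinearMap.proj_apply, ContinuousLinearEquiv.coe_coe, Pi.single_apply]
    by_cases h : m = n <;> simp [h]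

lemma Wir.add {G H d e} (hG : Wir c n G d) (hH : Wir c n H e) :
    Wir c n (fun c => G c + H c) (d + e) := by
  refine ⟨hG.diff.add hH.diff, ?_⟩
  rw [partialZ, fderiv_fun_add hG.diff hH.diff]
  simp only [ContinuousLinearMap.add_apply]
  rw [← hG.pz, ← hH.pz, partialZ, partialZ]
  ring

lemma Wir.mul {G H d e} (hG : Wir c n G d) (hH : Wir c n H e) :
    Wir c n (fun c => G c * H c) (d * H c + G c * e) := by
  refine ⟨hG.diff.mul hH.diff, ?_⟩
  rw [partialZ, fderiv_fun_mul hG.diff hH.diff]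
  simp only [ContinuousLinearMap.add_apply, ContinuousLinearMap.smul_apply, smul_eq_mul]
  rw [← hG.pz, ← hH.pz, partialZ, partialZ]
  ring

lemma Wir.const_mul {G d} (k : ℂ) (hG : Wir c n G d) :
    Wir c n (fun c => k * G c) (k * d) := by
  have := (Wir.const (c := c) (n := n) k).mul hG
  simpa using this

lemma Wir.neg {G d} (hG : Wir c n G d) : Wir c n (fun c => -G c) (-d) := by
  have := hG.const_mul (-1); simpa using this

lemma Wir.sub {G H d e} (hG : Wir c n G d) (hH : Wir c n H e) :
    Wir c n (fun c => G c - H c) (d - e) := by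
  have := hG.add hH.neg; simpa [sub_eq_add_neg] using this

lemma Wir.sum {ι : Type*} {s : Finset ι} {G : ι → (Idx N → ℂ) → ℂ} {d : ι → ℂ}
    (h : ∀ t ∈ s, Wir c n (G t) (d t)) :
    Wir c n (fun c => ∑ t ∈ s, G t c) (∑ t ∈ s, d t) := by
  classical
  induction s using Finset.induction_on with
  | empty => simpa using Wir.const (c := c) (n := n) 0
  | @insert x s' hx ih =>
    simp only [Finset.sum_insert hx]
    exact (h x (Finset.mem_insert_self x s')).add
      (ih fun t ht => h t (Finset.mem_insert_of_mem ht))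

lemma Wir.ite {G d} (p : Prop) [Decidable p] (hG : Wir c n G d) :
    Wir c n (fun c => if p then G c else 0) (if p then d else 0) := by
  by_cases h : p <;> simp only [h, if_true, if_false]
  · exact hG
  · exact Wir.const 0

lemma Wir.congr_fun {G H d} (hG : Wir c n G d) (h : ∀ c, G c = H c) : Wir c n H d := by
  have : G = H := funext h
  rwa [← this]


/-! ### Wirtinger derivatives of the coefficient functionals -/

lemma ite_add_zero' (P : Prop) [Decidable P] (A B : ℂ) :
    (if P then A + B else 0) = (if P then A else 0) + (if P then B else 0) := by
  split_ifs <;> simp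

lemma w_mu : Wir c n (muC N) (conj (c n)) := by
  have h := Wir.sum (c := c) (n := n) (s := Finset.univ)
    (G := fun (m : Idx N) c => c m * conj (c m))
    (d := fun m => (if m = n then 1 else 0) * conj (c m) + c m * 0)
    (fun m _ => (Wir.coord m).mul (Wir.conj_coord m))
  refine h.of_eq ?_
  simp [Finset.sum_ite_eq', ite_mul]

lemma w_PC : Wir c n (PC N) (((n:ℤ):ℂ) * conj (c n)) := by
  have h := Wir.sum (c := c) (n := n) (s := Finset.univ)
    (G := fun (m : Idx N) c => ((m:ℤ):ℂ) * (c m * conj (c m)))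
    (d := fun m => ((m:ℤ):ℂ) * ((if m = n then 1 else 0) * conj (c m) + c m * 0))
    (fun m _ => ((Wir.coord m).mul (Wir.conj_coord m)).const_mul _)
  refine h.of_eq ?_
  simp [Finset.sum_ite_eq', ite_mul, mul_ite]


lemma delta_swap (P : Prop) [Decidable P] (a m : Idx N) (x : ℂ) :
    (if P then (if a = m then x else 0) else 0) = if a = m then (if P then x else 0) else 0 := by
  split_ifs <;> rfl

lemma sum_ite_of_ite {ι : Type*} [Fintype ι] (p : Prop) [Decidable p] (F : ι → ℂ) :
    (∑ x : ι, if p then F x else 0) = if p then (∑ x, F x) else 0 := by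
  split_ifs <;> simp


lemma collapse_int (g : Idx N → Idx N → ℂ) (u v : Idx N → Idx N → ℤ)
    (h : ∀ a b, (u a b = v a b) ↔ b = a) :
    (∑ a : Idx N, ∑ b : Idx N, if u a b = v a b then g a b else 0) = ∑ a : Idx N, g a a := by
  refine Finset.sum_congr rfl fun a _ => ?_
  rw [Finset.sum_congr rfl fun b _ => if_congr (h a b) rfl rfl]
  simp

lemma w_AC : Wir c n (fun c => AC N (n:ℤ) c) (2 * muC N c) := by
  have h := Wir.sum (c := c) (n := n) (s := (Finset.univ : Finset ((Idx N × Idx N) × Idx N)))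
    (G := fun t c => if (t.1.1:ℤ) + -(t.1.2:ℤ) + (t.2:ℤ) = (n:ℤ)
        then (c t.1.1 * conj (c t.1.2)) * c t.2 else 0)
    (d := fun t => if (t.1.1:ℤ) + -(t.1.2:ℤ) + (t.2:ℤ) = (n:ℤ)
        then (((if t.1.1 = n then 1 else 0) * conj (c t.1.2) + c t.1.1 * 0) * c t.2
          + (c t.1.1 * conj (c t.1.2)) * (if t.2 = n then 1 else 0)) else 0)
    (fun t _ => Wir.ite _ (((Wir.coord t.1.1).mul (Wir.conj_coord t.1.2)).mul (Wir.coord t.2)))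
  refine h.of_eq ?_
  simp only [mul_zero, add_zero, zero_mul, ite_mul, mul_ite, one_mul, mul_one, ite_add_zero',
    Finset.sum_add_distrib, Fintype.sum_prod_type]
  simp only [delta_swap, sum_ite_of_ite, Finset.sum_ite_eq', Finset.mem_univ, if_true]
  rw [collapse_int (fun a b => conj (c a) * c b) _ _
        (fun a b => ⟨fun h => Subtype.ext (by linarith), fun h => by rw [h]; ring⟩),
      collapse_int (fun a b => c a * conj (c b)) _ _
        (fun a b => ⟨fun h => Subtype.ext (by linarith), fun h => by rw [h]; ring⟩)]
  rw [two_mul, muC]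
  congr 1
  exact Finset.sum_congr rfl fun a _ => mul_comm _ _


lemma w_BC : Wir c n (fun c => BC N (n:ℤ) c)
    (Complex.I * PC N c + (Complex.I*((n:ℤ):ℂ)) * muC N c) := by
  have h := Wir.sum (c := c) (n := n) (s := (Finset.univ : Finset ((Idx N × Idx N) × Idx N)))
    (G := fun t c => if (t.1.1:ℤ) + -(t.1.2:ℤ) + (t.2:ℤ) = (n:ℤ)
        then (c t.1.1 * conj (c t.1.2)) * (c t.2 * (Complex.I * ((t.2:ℤ):ℂ))) else 0)
    (d := fun t => if (t.1.1:ℤ) + -(t.1.2:ℤ) + (t.2:ℤ) = (n:ℤ)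
        then (((if t.1.1 = n then 1 else 0) * conj (c t.1.2) + c t.1.1 * 0)
            * (c t.2 * (Complex.I * ((t.2:ℤ):ℂ)))
          + (c t.1.1 * conj (c t.1.2))
            * ((if t.2 = n then 1 else 0) * (Complex.I * ((t.2:ℤ):ℂ)) + c t.2 * 0)) else 0)
    (fun t _ => Wir.ite _ (((Wir.coord t.1.1).mul (Wir.conj_coord t.1.2)).mul
      ((Wir.coord t.2).mul (Wir.const _))))
  refine h.of_eq ?_
  simp only [mul_zero, add_zero, zero_mul, ite_mul, mul_ite, one_mul, mul_one, ite_add_zero',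
    Finset.sum_add_distrib, Fintype.sum_prod_type]
  simp only [delta_swap, sum_ite_of_ite, Finset.sum_ite_eq', Finset.mem_univ, if_true]
  rw [collapse_int (fun a b => conj (c a) * (c b * (Complex.I * ((b:ℤ):ℂ)))) _ _
        (fun a b => ⟨fun h => Subtype.ext (by linarith), fun h => by rw [h]; ring⟩),
      collapse_int (fun a b => c a * conj (c b) * (Complex.I * ((n:ℤ):ℂ))) _ _
        (fun a b => ⟨fun h => Subtype.ext (by linarith), fun h => by rw [h]; ring⟩)]
  rw [PC, muC, Finset.mul_sum, Finset.mul_sum]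
  congr 1
  · exact Finset.sum_congr rfl fun a _ => by ring
  · exact Finset.sum_congr rfl fun a _ => by ring

lemma w_CC : Wir c n (fun c => CC N (n:ℤ) c)
    (-(2*(Complex.I * PC N c))) := by
  have hconj : ∀ m : Idx N, Wir c n (fun c => conj (c m * (Complex.I * ((m:ℤ):ℂ)))) 0 := by
    intro m
    refine (((Wir.conj_coord (c := c) (n := n) m).const_mul
      (conj (Complex.I * ((m:ℤ):ℂ)))).of_eq (by simp)).congr_fun fun c => ?_
    simp only [map_mul]; ring
  have h := Wir.sum (c := c) (n := n) (s := (Finset.univ : Finset ((Idx N × Idx N) × Idx N)))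
    (G := fun t c => if (t.1.1:ℤ) + (t.1.2:ℤ) + -(t.2:ℤ) = (n:ℤ)
        then (c t.1.1 * c t.1.2) * conj (c t.2 * (Complex.I * ((t.2:ℤ):ℂ))) else 0)
    (d := fun t => if (t.1.1:ℤ) + (t.1.2:ℤ) + -(t.2:ℤ) = (n:ℤ)
        then (((if t.1.1 = n then 1 else 0) * c t.1.2 + c t.1.1 * (if t.1.2 = n then 1 else 0))
            * conj (c t.2 * (Complex.I * ((t.2:ℤ):ℂ)))
          + (c t.1.1 * c t.1.2) * 0) else 0)
    (fun t _ => Wir.ite _ (((Wir.coord t.1.1).mul (Wir.coord t.1.2)).mul (hconj t.2)))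
  refine h.of_eq ?_
  simp only [mul_zero, add_zero, zero_mul, add_mul, ite_mul, mul_ite, one_mul, mul_one,
    ite_add_zero', Finset.sum_add_distrib, Fintype.sum_prod_type, delta_swap, sum_ite_of_ite,
    Finset.sum_ite_eq', Finset.mem_univ, if_true]
  rw [collapse_int (fun a b => c a * conj (c b * (Complex.I * ((b:ℤ):ℂ)))) _ _
        (fun a b => ⟨fun h => Subtype.ext (by linarith), fun h => by rw [h]; ring⟩),
      collapse_int (fun a b => c a * conj (c b * (Complex.I * ((b:ℤ):ℂ)))) _ _
        (fun a b => ⟨fun h => Subtype.ext (by linarith), fun h => by rw [h]; ring⟩)]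
  rw [PC, Finset.mul_sum, Finset.mul_sum]
  rw [show (∑ a : Idx N, c a * conj (c a * (Complex.I * ((a:ℤ):ℂ))))
        + (∑ a : Idx N, c a * conj (c a * (Complex.I * ((a:ℤ):ℂ))))
      = ∑ a : Idx N, 2 * (c a * conj (c a * (Complex.I * ((a:ℤ):ℂ)))) from by
    rw [← Finset.sum_add_distrib]; exact Finset.sum_congr rfl fun a _ => by ring]
  rw [← Finset.sum_neg_distrib]
  exact Finset.sum_congr rfl fun a _ => by
    simp only [map_mul, Complex.conj_I, map_intCast]
    ring


lemma conj_AC_flat (k : ℤ) : conj (AC N k c)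
    = ∑ a : Idx N, ∑ b : Idx N, ∑ m : Idx N,
        if (a:ℤ) + -(b:ℤ) + (m:ℤ) = k then (conj (c a) * c b) * conj (c m) else 0 := by
  rw [AC, map_sum]
  simp only [Fintype.sum_prod_type, apply_ite (starRingEnd ℂ), map_zero, map_mul,
    Complex.conj_conj]

lemma w_QC : Wir c n (fun c => QC N c)
    (conj (AC N (n:ℤ) c) + conj (AC N (n:ℤ) c)) := by
  have h := Wir.sum (c := c) (n := n)
    (s := (Finset.univ : Finset ((Idx N × Idx N) × (Idx N × Idx N))))
    (G := fun t c => if (t.1.1:ℤ) + -(t.1.2:ℤ) + ((t.2.1:ℤ) + -(t.2.2:ℤ)) = 0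
        then (c t.1.1 * conj (c t.1.2)) * (c t.2.1 * conj (c t.2.2)) else 0)
    (d := fun t => if (t.1.1:ℤ) + -(t.1.2:ℤ) + ((t.2.1:ℤ) + -(t.2.2:ℤ)) = 0
        then (((if t.1.1 = n then 1 else 0) * conj (c t.1.2) + c t.1.1 * 0)
            * (c t.2.1 * conj (c t.2.2))
          + (c t.1.1 * conj (c t.1.2))
            * ((if t.2.1 = n then 1 else 0) * conj (c t.2.2) + c t.2.1 * 0)) else 0)
    (fun t _ => Wir.ite _ (((Wir.coord t.1.1).mul (Wir.conj_coord t.1.2)).mul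
      ((Wir.coord t.2.1).mul (Wir.conj_coord t.2.2))))
  refine h.of_eq ?_
  simp only [mul_zero, add_zero, zero_mul, add_mul, ite_mul, mul_ite, one_mul, mul_one,
    ite_add_zero', Finset.sum_add_distrib, Fintype.sum_prod_type, delta_swap, sum_ite_of_ite,
    Finset.sum_ite_eq', Finset.mem_univ, if_true]
  rw [conj_AC_flat]
  congr 1
  · exact Finset.sum_congr rfl fun b _ => Finset.sum_congr rfl fun d _ =>
      Finset.sum_congr rfl fun e _ =>
        if_congr ⟨fun h => by linarith, fun h => by linarith⟩ (by ring) rfl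
  · rw [Finset.sum_comm]
    exact Finset.sum_congr rfl fun b _ => Finset.sum_congr rfl fun a _ =>
      Finset.sum_congr rfl fun e _ =>
        if_congr ⟨fun h => by linarith, fun h => by linarith⟩ (by ring) rfl


lemma QC_flat : QC N c
    = ∑ a : Idx N, ∑ b : Idx N, ∑ d : Idx N, ∑ e : Idx N,
        if (a:ℤ) + -(b:ℤ) + ((d:ℤ) + -(e:ℤ)) = 0
        then (c a * conj (c b)) * (c d * conj (c e)) else 0 := by
  simp only [QC, Fintype.sum_prod_type]

lemma w_Q5C : Wir c n (fun c => Q5C N (n:ℤ) c) (3 * QC N c) := by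
  have h := Wir.sum (c := c) (n := n)
    (s := (Finset.univ : Finset (((Idx N × Idx N) × (Idx N × Idx N)) × Idx N)))
    (G := fun t c => if (t.1.1.1:ℤ) + -(t.1.1.2:ℤ) + ((t.1.2.1:ℤ) + -(t.1.2.2:ℤ)) + (t.2:ℤ) = (n:ℤ)
        then ((c t.1.1.1 * conj (c t.1.1.2)) * (c t.1.2.1 * conj (c t.1.2.2))) * c t.2 else 0)
    (d := fun t => if (t.1.1.1:ℤ) + -(t.1.1.2:ℤ) + ((t.1.2.1:ℤ) + -(t.1.2.2:ℤ)) + (t.2:ℤ) = (n:ℤ)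
        then ((((if t.1.1.1 = n then 1 else 0) * conj (c t.1.1.2) + c t.1.1.1 * 0)
              * (c t.1.2.1 * conj (c t.1.2.2))
            + (c t.1.1.1 * conj (c t.1.1.2))
              * ((if t.1.2.1 = n then 1 else 0) * conj (c t.1.2.2) + c t.1.2.1 * 0)) * c t.2
          + ((c t.1.1.1 * conj (c t.1.1.2)) * (c t.1.2.1 * conj (c t.1.2.2)))
              * (if t.2 = n then 1 else 0)) else 0)
    (fun t _ => Wir.ite _ ((((Wir.coord t.1.1.1).mul (Wir.conj_coord t.1.1.2)).mul
      ((Wir.coord t.1.2.1).mul (Wir.conj_coord t.1.2.2))).mul (Wir.coord t.2)))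
  refine h.of_eq ?_
  simp only [mul_zero, add_zero, zero_mul, add_mul, ite_mul, mul_ite, one_mul, mul_one,
    ite_add_zero', Finset.sum_add_distrib, Fintype.sum_prod_type, delta_swap, sum_ite_of_ite,
    Finset.sum_ite_eq', Finset.mem_univ, if_true]
  rw [show (3:ℂ) * QC N c = QC N c + QC N c + QC N c from by ring, QC_flat]
  congr 1
  congr 1
  · conv_lhs => rw [Finset.sum_comm]
    refine Finset.sum_congr rfl fun x1 _ => Finset.sum_congr rfl fun x _ => ?_
    conv_lhs => rw [Finset.sum_comm]
    exact Finset.sum_congr rfl fun x3 _ => Finset.sum_congr rfl fun x2 _ =>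
      if_congr ⟨fun h => by linarith, fun h => by linarith⟩ (by ring) rfl
  · refine Finset.sum_congr rfl fun x _ => Finset.sum_congr rfl fun x1 _ => ?_
    conv_lhs => rw [Finset.sum_comm]
    exact Finset.sum_congr rfl fun x3 _ => Finset.sum_congr rfl fun x2 _ =>
      if_congr ⟨fun h => by linarith, fun h => by linarith⟩ (by ring) rfl
  · exact Finset.sum_congr rfl fun x _ => Finset.sum_congr rfl fun x1 _ =>
      Finset.sum_congr rfl fun x2 _ => Finset.sum_congr rfl fun x3 _ =>
      if_congr ⟨fun h => by linarith, fun h => by linarith⟩ (by ring) rfl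


/-! ### Conjugation and summation identities -/

lemma conj_muC : conj (muC N c) = muC N c := by
  rw [muC, map_sum]
  exact Finset.sum_congr rfl fun m _ => by rw [map_mul, Complex.conj_conj]; ring

lemma conj_PC : conj (PC N c) = PC N c := by
  rw [PC, map_sum]
  exact Finset.sum_congr rfl fun m _ => by
    rw [map_mul, map_mul, Complex.conj_conj, map_intCast]; ring

lemma conj_QC : conj (QC N c) = QC N c := by
  rw [QC_flat]
  simp only [map_sum, apply_ite (starRingEnd ℂ), map_zero, map_mul, Complex.conj_conj]
  conv_lhs => rw [Finset.sum_comm]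
  refine Finset.sum_congr rfl fun b _ => Finset.sum_congr rfl fun a _ => ?_
  conv_lhs => rw [Finset.sum_comm]
  exact Finset.sum_congr rfl fun e _ => Finset.sum_congr rfl fun d _ =>
    if_congr ⟨fun h => by linarith, fun h => by linarith⟩ (by ring) rfl

lemma conj_SZ2 : conj (∑ m : Idx N, ((m:ℤ):ℂ) * ((m:ℤ):ℂ))
    = ∑ m : Idx N, ((m:ℤ):ℂ) * ((m:ℤ):ℂ) := by
  simp [map_sum]

lemma sum_coe_zero : (∑ m : Idx N, ((m:ℤ):ℂ)) = 0 := by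
  have h1 : (∑ m : Idx N, ((m:ℤ):ℂ)) = (((∑ m : Idx N, (m:ℤ)) : ℤ) : ℂ) := by
    push_cast
    rfl
  rw [h1]
  have h2 : (∑ m : Idx N, (m:ℤ)) = ∑ x ∈ Finset.Icc (-(N:ℤ)) (N:ℤ), x :=
    Finset.sum_coe_sort _ (fun x => x)
  have h3 : (∑ x ∈ Finset.Icc (-(N:ℤ)) (N:ℤ), x)
      = ∑ x ∈ Finset.Icc (-(N:ℤ)) (N:ℤ), -x := by
    refine Finset.sum_nbij' (fun x => -x) (fun x => -x) ?_ ?_ ?_ ?_ ?_ <;>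
      intros <;> simp_all <;> omega
  have : (∑ x ∈ Finset.Icc (-(N:ℤ)) (N:ℤ), x) = 0 := by
    have h4 := h3
    rw [Finset.sum_neg_distrib] at h4
    omega
  rw [h2, this]
  simp

lemma sum_conj_mul_AC : (∑ m : Idx N, conj (c m) * AC N (m:ℤ) c) = QC N c := by
  have hA : ∀ m : Idx N, conj (c m) * AC N (m:ℤ) c
      = ∑ a : Idx N, ∑ b : Idx N, ∑ d : Idx N,
          if (a:ℤ) + -(b:ℤ) + (d:ℤ) = (m:ℤ)
          then conj (c m) * ((c a * conj (c b)) * c d) else 0 := by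
    intro m
    rw [AC, Finset.mul_sum]
    simp only [Fintype.sum_prod_type, mul_ite, mul_zero, Finset.mul_sum]
  simp only [hA]
  rw [QC_flat]
  conv_lhs => rw [Finset.sum_comm]
  refine Finset.sum_congr rfl fun a _ => ?_
  conv_lhs => rw [Finset.sum_comm]
  refine Finset.sum_congr rfl fun b _ => ?_
  conv_lhs => rw [Finset.sum_comm]
  refine Finset.sum_congr rfl fun d _ => Finset.sum_congr rfl fun m _ =>
    if_congr ⟨fun h => by linarith, fun h => by linarith⟩ (by ring) rfl

lemma sum_mul_conj_AC : (∑ m : Idx N, conj (AC N (m:ℤ) c) * c m) = QC N c := by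
  have h : (∑ m : Idx N, conj (AC N (m:ℤ) c) * c m)
      = conj (∑ m : Idx N, conj (c m) * AC N (m:ℤ) c) := by
    rw [map_sum]
    exact Finset.sum_congr rfl fun m _ => by
      rw [map_mul, Complex.conj_conj]; ring
  rw [h, sum_conj_mul_AC, conj_QC]


/-! ### The diagonal Wirtinger derivative of the field, and its sum -/

def Dval (N : ℕ) (α β : ℝ) (c : Idx N → ℂ) (n : Idx N) : ℂ :=
  Complex.I*Complex.I*Complex.I * (((n:ℤ):ℂ) * ((n:ℤ):ℂ))
  - ((2*α:ℝ):ℂ) * Complex.I * (((n:ℤ):ℂ) * (c n * conj (c n)))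
  - ((2*α:ℝ):ℂ) * Complex.I * muC N c * ((n:ℤ):ℂ)
  + ((2*(α+β):ℝ):ℂ) * Complex.I * PC N c
  + ((2*(α+β):ℝ):ℂ) * Complex.I * muC N c * ((n:ℤ):ℂ)
  - ((2*α+β:ℝ):ℂ) * (2 * Complex.I) * PC N c
  - Complex.I * ((-α^2-α*β/2:ℝ):ℂ) * 3 * QC N c
  - Complex.I * ((-(α*β):ℝ):ℂ) * (conj (c n) * AC N (n:ℤ) c)
  - Complex.I * ((-(α*β):ℝ):ℂ) * (2 * (muC N c * muC N c))
  - Complex.I * ((3*α*β/(4*Real.pi)+α^2/Real.pi:ℝ):ℂ) * (2*(Real.pi:ℂ)) * 2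
      * (conj (AC N (n:ℤ) c) * c n)
  + Complex.I * ((α^2:ℝ):ℂ) * 2 * muC N c * (c n * conj (c n))
  - Complex.I * Complex.I * Complex.I * ((α:ℝ):ℂ) / (Real.pi:ℂ) * (2*(Real.pi:ℂ))
      * (((n:ℤ):ℂ) * (c n * conj (c n)))
  - Complex.I * GammaC N α β c

lemma w_Gamma (α β : ℝ) : Wir c n (fun c => GammaC N α β c)
    (((3*α*β/(4*Real.pi)+α^2/Real.pi:ℝ):ℂ) * (2*(Real.pi:ℂ))
        * (conj (AC N (n:ℤ) c) + conj (AC N (n:ℤ) c))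
      - ((α^2:ℝ):ℂ) * (conj (c n) * muC N c + muC N c * conj (c n))
      + (Complex.I*((α:ℝ):ℂ)/(Real.pi:ℂ)) * (2*(Real.pi:ℂ))
        * (Complex.I * (((n:ℤ):ℂ) * conj (c n)))) := by
  have hQ := w_QC.const_mul (c := c) (n := n)
    (((3*α*β/(4*Real.pi)+α^2/Real.pi:ℝ):ℂ) * (2*(Real.pi:ℂ)))
  have hMu2 : Wir c n (fun c => ((α^2:ℝ):ℂ) * (muC N c)^2)
      (((α^2:ℝ):ℂ) * (conj (c n) * muC N c + muC N c * conj (c n))) := by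
    refine ((w_mu.mul w_mu).const_mul ((α^2:ℝ):ℂ)).congr_fun fun c => by ring
  have hP := (w_PC.const_mul (c := c) (n := n) Complex.I).const_mul
    ((Complex.I*((α:ℝ):ℂ)/(Real.pi:ℂ)) * (2*(Real.pi:ℂ)))
  exact ((hQ.sub hMu2).add hP)

lemma wir_gdnls (α β : ℝ) : Wir c n (gdnlsField N α β n) (Dval N α β c n) := by
  have t1 := (((Wir.coord (c := c) (n := n) n).mul (Wir.const (Complex.I*((n:ℤ):ℂ)))).mul
    (Wir.const (Complex.I*((n:ℤ):ℂ)))).const_mul Complex.I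
  have t2 := (w_mu.const_mul (c := c) (n := n) ((2*α:ℝ):ℂ)).mul
    ((Wir.coord n).mul (Wir.const (Complex.I*((n:ℤ):ℂ))))
  have t3 := w_BC.const_mul (c := c) (n := n) ((2*(α+β):ℝ):ℂ)
  have t4 := w_CC.const_mul (c := c) (n := n) ((2*α+β:ℝ):ℂ)
  have t5 := w_Q5C.const_mul (c := c) (n := n) (Complex.I * ((-α^2-α*β/2:ℝ):ℂ))
  have t6 := (w_mu.mul w_AC).const_mul (c := c) (n := n) (Complex.I * ((-(α*β):ℝ):ℂ))
  have t7 := ((w_Gamma α β).mul (Wir.coord n)).const_mul (c := c) (n := n) Complex.I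
  have whole := (((((t1.sub t2).add t3).add t4).sub t5).sub t6).sub t7
  refine (whole.congr_fun fun c => (gdnls_explicit α β n c).symm).of_eq ?_
  rw [show (if n = n then (1:ℂ) else 0) = 1 from if_pos rfl]
  rw [Dval]
  ring

lemma sum_Dval (α β : ℝ) : (∑ n : Idx N, Dval N α β c n) =
    (Complex.I*Complex.I*Complex.I) * (∑ m : Idx N, ((m:ℤ):ℂ) * ((m:ℤ):ℂ))
    + (-(((2*α:ℝ):ℂ) * Complex.I * muC N c) + ((2*(α+β):ℝ):ℂ) * Complex.I * muC N c) * 0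
    + (-(((2*α:ℝ):ℂ) * Complex.I)
        - Complex.I*Complex.I*Complex.I * ((α:ℝ):ℂ) / (Real.pi:ℂ) * (2*(Real.pi:ℂ))) * PC N c
    + (Complex.I * ((α^2:ℝ):ℂ) * 2 * muC N c) * muC N c
    + (-(Complex.I * ((-(α*β):ℝ):ℂ))) * QC N c
    + (-(Complex.I * ((3*α*β/(4*Real.pi)+α^2/Real.pi:ℝ):ℂ) * (2*(Real.pi:ℂ)) * 2)) * QC N c
    + ((Finset.univ : Finset (Idx N)).card : ℂ)
        * (((2*(α+β):ℝ):ℂ) * Complex.I * PC N c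
          - ((2*α+β:ℝ):ℂ) * (2*Complex.I) * PC N c
          - Complex.I * ((-α^2-α*β/2:ℝ):ℂ) * 3 * QC N c
          - Complex.I * ((-(α*β):ℝ):ℂ) * (2 * (muC N c * muC N c))
          - Complex.I * GammaC N α β c) := by
  have hsplit : ∀ n : Idx N, Dval N α β c n =
      (Complex.I*Complex.I*Complex.I) * (((n:ℤ):ℂ) * ((n:ℤ):ℂ))
      + (-(((2*α:ℝ):ℂ) * Complex.I * muC N c) + ((2*(α+β):ℝ):ℂ) * Complex.I * muC N c)
          * ((n:ℤ):ℂ)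
      + (-(((2*α:ℝ):ℂ) * Complex.I)
          - Complex.I*Complex.I*Complex.I * ((α:ℝ):ℂ) / (Real.pi:ℂ) * (2*(Real.pi:ℂ)))
          * (((n:ℤ):ℂ) * (c n * conj (c n)))
      + (Complex.I * ((α^2:ℝ):ℂ) * 2 * muC N c) * (c n * conj (c n))
      + (-(Complex.I * ((-(α*β):ℝ):ℂ))) * (conj (c n) * AC N (n:ℤ) c)
      + (-(Complex.I * ((3*α*β/(4*Real.pi)+α^2/Real.pi:ℝ):ℂ) * (2*(Real.pi:ℂ)) * 2))
          * (conj (AC N (n:ℤ) c) * c n)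
      + (((2*(α+β):ℝ):ℂ) * Complex.I * PC N c
          - ((2*α+β:ℝ):ℂ) * (2*Complex.I) * PC N c
          - Complex.I * ((-α^2-α*β/2:ℝ):ℂ) * 3 * QC N c
          - Complex.I * ((-(α*β):ℝ):ℂ) * (2 * (muC N c * muC N c))
          - Complex.I * GammaC N α β c) := by
    intro n
    rw [Dval]
    ring
  simp only [hsplit]
  simp only [Finset.sum_add_distrib, ← Finset.mul_sum]
  rw [sum_coe_zero, sum_conj_mul_AC, sum_mul_conj_AC]
  rw [show (∑ n : Idx N, ((n:ℤ):ℂ) * (c n * conj (c n))) = PC N c from rfl]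
  rw [show (∑ n : Idx N, c n * conj (c n)) = muC N c from rfl]
  rw [Finset.sum_const, nsmul_eq_mul]

lemma conj_GammaC (α β : ℝ) : conj (GammaC N α β c) = GammaC N α β c := by
  rw [GammaC]
  simp only [map_add, map_sub, map_mul, map_div₀, map_pow, map_ofNat, Complex.conj_I,
    Complex.conj_ofReal, conj_muC, conj_PC, conj_QC]
  ring

end Stmt18Aux

/-- the truncated gauged DNLS vector field has vanishing divergence,
hence its flow preserves the Lebesgue measure on `ℂ^{2N+1}`. -/
theorem stmt18 (N : ℕ) (α β : ℝ) (c : Idx N → ℂ) :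
    cdiv (gdnlsField N α β) c = 0 := by
  classical
  open Stmt18Aux in
  have key : ∀ n : Idx N, partialZ (gdnlsField N α β n) c n = Stmt18Aux.Dval N α β c n :=
    fun n => (Stmt18Aux.wir_gdnls α β).pz
  unfold cdiv
  simp only [key]
  rw [Finset.sum_add_distrib, ← map_sum]
  rw [Stmt18Aux.sum_Dval]
  simp only [map_add, map_sub, map_mul, map_neg, map_div₀, map_zero, Complex.conj_I,
    Complex.conj_ofReal, Stmt18Aux.conj_muC, Stmt18Aux.conj_PC, Stmt18Aux.conj_QC,
    Stmt18Aux.conj_GammaC, Stmt18Aux.conj_SZ2, map_natCast, map_ofNat]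
  ring
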